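/- arXiv:1606.03773 — 7 statements merged into one kernel-verified Lean document; each statement's English description precedes it below -/
import Mathlib

section
/- Let (Ω, μ) be a probability measure space, f ∈ L_p(μ) for 0 < p < ∞, and suppose f satisfies the L_∞ Remez inequality with parameters b and R: for every measurable set B ⊆ Ω with μ(B) ≤ b, the essential supremum of |f| on Ω is at most R times the essential supremum of |f| on Ω \ B. Then for every measurable set B ⊆ Ω with μ(B) ≤ b/2, one has ‖f‖_{L_p(Ω)} ≤ 2^{1/p} R ‖f‖_{L_p(Ω∖B)}. -/
open MeasureTheory Real Filter

lemma essSup_abs_le_of_ae {α : Type*} [MeasurableSpace α] (ν : Measure α) (f : α → ℝ)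
    (t : ℝ) (ht : 0 ≤ t) (h : ∀ᵐ x ∂ν, |f x| ≤ t) : essSup (fun x => |f x|) ν ≤ t := by
  rw [essSup_eq_sInf]
  have hmem : t ∈ {a : ℝ | ν {x | a < |f x|} = 0} := by
    have := ae_iff.mp h
    simpa [not_le] using this
  by_cases hbd : BddBelow {a : ℝ | ν {x | a < |f x|} = 0}
  · exact csInf_le hbd hmem
  · rw [Real.sInf_of_not_bddBelow hbd]; exact ht

/-- an L_∞ Remez inequality with parameters b, R implies the
L_p Remez inequality with parameters b/2, 2^{1/p} R. -/
theorem remez_infty_implies_remez_p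
    {Ω : Type*} [MeasurableSpace Ω] (μ : Measure Ω) [IsProbabilityMeasure μ]
    (f : Ω → ℝ) (p : ℝ) (hp : 0 < p) (b R : ℝ)
    (hb : 0 < b) (hb1 : b ≤ 1) (hR : 1 ≤ R)
    (hf : MemLp f (ENNReal.ofReal p) μ) (hfb : MemLp f ⊤ μ)
    (hRem : ∀ B : Set Ω, MeasurableSet B → μ B ≤ ENNReal.ofReal b →
      essSup (fun x => |f x|) μ ≤ R * essSup (fun x => |f x|) (μ.restrict Bᶜ)) :
    ∀ B : Set Ω, MeasurableSet B → μ B ≤ ENNReal.ofReal (b / 2) →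
      (∫ x, |f x| ^ p ∂μ) ^ (1 / p) ≤
        2 ^ (1 / p) * R * (∫ x in Bᶜ, |f x| ^ p ∂μ) ^ (1 / p) := by
  intro B hB hμB
  have hp' : p ≠ 0 := hp.ne'
  have hR0 : (0:ℝ) < R := lt_of_lt_of_le one_pos hR
  have hpinv : (0:ℝ) < 1 / p := by positivity
  have hnonneg : ∀ x, 0 ≤ |f x| ^ p := fun x => Real.rpow_nonneg (abs_nonneg _) p
  -- integrability of |f|^p
  have hint : Integrable (fun x => |f x| ^ p) μ := by
    have h1 : ENNReal.ofReal p ≠ 0 := by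
      simp [ENNReal.ofReal_eq_zero, not_le, hp]
    have := hf.integrable_norm_rpow h1 ENNReal.ofReal_ne_top
    simpa [ENNReal.toReal_ofReal hp.le, Real.norm_eq_abs] using this
  set I := ∫ x in Bᶜ, |f x| ^ p ∂μ with hIdef
  have hInn : 0 ≤ I := integral_nonneg fun x => hnonneg x
  -- |f| is a.e. bounded
  have hbound : IsBoundedUnder (· ≤ ·) (ae μ) fun x => |f x| := by
    have h2 : eLpNormEssSup f μ < ⊤ := by
      have := hfb.2; rwa [eLpNorm_exponent_top] at this
    obtain ⟨C, hC⟩ := eLpNormEssSup_lt_top_iff_isBoundedUnder.mp h2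
    refine ⟨(C : ℝ), ?_⟩
    rw [eventually_map] at hC ⊢
    refine hC.mono fun x hx => ?_
    have : ‖f x‖ ≤ (C : ℝ) := hx
    simpa [Real.norm_eq_abs] using this
  have hM : ∀ᵐ x ∂μ, |f x| ≤ essSup (fun x => |f x|) μ := ae_le_essSup hbound
  have hμBb : μ B ≤ ENNReal.ofReal b :=
    le_trans hμB (ENNReal.ofReal_le_ofReal (by linarith))
  by_cases hI0 : I = 0
  · -- degenerate case: f = 0 a.e.
    have hz : ∀ᵐ x ∂(μ.restrict Bᶜ), |f x| ^ p = 0 := by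
      have := (integral_eq_zero_iff_of_nonneg_ae (ae_of_all _ hnonneg)
        (hint.restrict)).mp hI0
      exact this
    have hz' : ∀ᵐ x ∂(μ.restrict Bᶜ), |f x| ≤ 0 := by
      refine hz.mono fun x hx => ?_
      have := (Real.rpow_eq_zero_iff_of_nonneg (abs_nonneg (f x))).mp hx
      simp [this.1]
    have hess : essSup (fun x => |f x|) (μ.restrict Bᶜ) ≤ 0 :=
      essSup_abs_le_of_ae _ _ 0 le_rfl hz'
    have hMle : essSup (fun x => |f x|) μ ≤ 0 :=
      le_trans (hRem B hB hμBb) (mul_nonpos_of_nonneg_of_nonpos hR0.le hess)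
    have hfz : ∀ᵐ x ∂μ, |f x| ^ p = 0 := by
      refine hM.mono fun x hx => ?_
      have hfx : |f x| = 0 := le_antisymm (le_trans hx hMle) (abs_nonneg _)
      rw [hfx]
      exact Real.zero_rpow hp'
    have hIz : (∫ x, |f x| ^ p ∂μ) = 0 := by
      rw [integral_congr_ae hfz]; simp
    rw [hIz, hI0, Real.zero_rpow hpinv.ne']
    simp [Real.zero_rpow hpinv.ne']
  · have hIpos : 0 < I := lt_of_le_of_ne hInn (Ne.symm hI0)
    -- measurable representative
    set g := hf.1.mk f with hgdef
    have hg : StronglyMeasurable g := hf.1.stronglyMeasurable_mk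
    have hfg : f =ᵐ[μ] g := hf.1.ae_eq_mk
    set ε := 2 * I / b with hεdef
    have hε : 0 < ε := by positivity
    have hmeas : Measurable fun x => |g x| ^ p :=
      (Real.continuous_rpow_const hp.le).measurable.comp hg.measurable.abs
    set D := {x | ε ≤ |g x| ^ p} ∩ Bᶜ with hDdef
    have hD : MeasurableSet D :=
      (measurableSet_le measurable_const hmeas).inter hB.compl
    -- Chebyshev
    have hgp_eq : (fun x => |f x| ^ p) =ᵐ[μ] fun x => |g x| ^ p :=
      hfg.mono fun x hx => by simp only [hx]
    have hintg : Integrable (fun x => |g x| ^ p) μ := hint.congr hgp_eq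
    have hIg : I = ∫ x in Bᶜ, |g x| ^ p ∂μ :=
      integral_congr_ae (ae_restrict_of_ae hgp_eq)
    have cheb :
        ε * ((μ.restrict Bᶜ) {x | ε ≤ |g x| ^ p}).toReal ≤ ∫ x in Bᶜ, |g x| ^ p ∂μ :=
      mul_meas_ge_le_integral_of_nonneg
        (ae_of_all _ fun x => Real.rpow_nonneg (abs_nonneg _) p) (hintg.restrict) ε
    have hμD : μ D ≤ ENNReal.ofReal (b / 2) := by
      have hre : (μ.restrict Bᶜ) {x | ε ≤ |g x| ^ p} = μ D := by
        rw [Measure.restrict_apply (measurableSet_le measurable_const hmeas)]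
      rw [hre, ← hIg] at cheb
      have htr : (μ D).toReal ≤ b / 2 := by
        rw [hεdef, div_mul_eq_mul_div, div_le_iff₀ hb] at cheb
        nlinarith [hIpos]
      exact (ENNReal.le_ofReal_iff_toReal_le (measure_ne_top μ D) (by positivity)).mpr htr
    have hμBD : μ (B ∪ D) ≤ ENNReal.ofReal b := by
      calc μ (B ∪ D) ≤ μ B + μ D := measure_union_le _ _
        _ ≤ ENNReal.ofReal (b / 2) + ENNReal.ofReal (b / 2) := add_le_add hμB hμD
        _ = ENNReal.ofReal b := by
            rw [← ENNReal.ofReal_add (by positivity) (by positivity)]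
            norm_num
    set t := ε ^ (1 / p) with htdef
    have ht : 0 < t := Real.rpow_pos_of_pos hε _
    -- essSup on (B ∪ D)ᶜ is ≤ t
    have h_ae : ∀ᵐ x ∂(μ.restrict (B ∪ D)ᶜ), |f x| ≤ t := by
      have h1 : ∀ᵐ x ∂(μ.restrict (B ∪ D)ᶜ), x ∈ (B ∪ D)ᶜ :=
        ae_restrict_mem (hB.union hD).compl
      have h2 : ∀ᵐ x ∂(μ.restrict (B ∪ D)ᶜ), f x = g x := ae_restrict_of_ae hfg
      filter_upwards [h1, h2] with x hx hx2
      rw [hx2]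
      simp only [Set.mem_compl_iff, Set.mem_union, not_or] at hx
      have hxD : ¬(ε ≤ |g x| ^ p) := fun hc => hx.2 ⟨hc, hx.1⟩
      have hle : |g x| ^ p ≤ ε := (not_le.mp hxD).le
      calc |g x| = (|g x| ^ p) ^ (1 / p) := by
            rw [one_div, Real.rpow_rpow_inv (abs_nonneg _) hp']
        _ ≤ ε ^ (1 / p) := Real.rpow_le_rpow (Real.rpow_nonneg (abs_nonneg _) _) hle hpinv.le
    have hessle : essSup (fun x => |f x|) (μ.restrict (B ∪ D)ᶜ) ≤ t :=
      essSup_abs_le_of_ae _ _ t ht.le h_ae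
    have hMle : essSup (fun x => |f x|) μ ≤ R * t :=
      le_trans (hRem (B ∪ D) (hB.union hD) hμBD)
        (mul_le_mul_of_nonneg_left hessle hR0.le)
    -- bound ∫_B |f|^p
    have hfRt : ∀ᵐ x ∂μ, |f x| ^ p ≤ (R * t) ^ p := by
      refine hM.mono fun x hx => ?_
      exact Real.rpow_le_rpow (abs_nonneg _) (le_trans hx hMle) hp.le
    have hRtp : (R * t) ^ p = R ^ p * ε := by
      rw [Real.mul_rpow hR0.le ht.le, htdef, one_div, Real.rpow_inv_rpow hε.le hp']
    have hIB : ∫ x in B, |f x| ^ p ∂μ ≤ R ^ p * I := by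
      have hc1 : ∫ x in B, |f x| ^ p ∂μ ≤ ∫ _ in B, (R * t) ^ p ∂μ :=
        integral_mono_ae hint.restrict (integrable_const _) (ae_restrict_of_ae hfRt)
      have hc2 : ∫ _ in B, (R * t) ^ p ∂μ = (μ B).toReal * (R * t) ^ p := by
        rw [setIntegral_const, smul_eq_mul]; rfl
      have hc3 : (μ B).toReal ≤ b / 2 :=
        ENNReal.toReal_le_of_le_ofReal (by positivity) hμB
      have hRtnn : 0 ≤ (R * t) ^ p := Real.rpow_nonneg (by positivity) _
      calc ∫ x in B, |f x| ^ p ∂μ ≤ (μ B).toReal * (R * t) ^ p := by rw [← hc2]; exact hc1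
        _ ≤ (b / 2) * (R * t) ^ p := mul_le_mul_of_nonneg_right hc3 hRtnn
        _ = (b / 2) * (R ^ p * (2 * I / b)) := by rw [hRtp, hεdef]
        _ = R ^ p * I := by field_simp
    have htotal : ∫ x, |f x| ^ p ∂μ ≤ 2 * (R ^ p * I) := by
      have hsplit : ∫ x in B, |f x| ^ p ∂μ + ∫ x in Bᶜ, |f x| ^ p ∂μ = ∫ x, |f x| ^ p ∂μ :=
        integral_add_compl hB hint
      have hRp1 : 1 ≤ R ^ p := Real.one_le_rpow hR hp.le
      have : I ≤ R ^ p * I := le_mul_of_one_le_left hInn hRp1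
      rw [← hsplit, ← hIdef]
      linarith
    -- conclude
    have hlhs : (∫ x, |f x| ^ p ∂μ) ^ (1 / p) ≤ (2 * (R ^ p * I)) ^ (1 / p) :=
      Real.rpow_le_rpow (integral_nonneg fun x => hnonneg x) htotal hpinv.le
    have hrhs : (2 * (R ^ p * I)) ^ (1 / p) = 2 ^ (1 / p) * R * I ^ (1 / p) := by
      rw [Real.mul_rpow (by norm_num) (by positivity),
        Real.mul_rpow (Real.rpow_nonneg hR0.le _) hInn, one_div,
        Real.rpow_rpow_inv hR0.le hp', mul_assoc]
    calc (∫ x, |f x| ^ p ∂μ) ^ (1 / p) ≤ (2 * (R ^ p * I)) ^ (1 / p) := hlhs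
      _ = 2 ^ (1 / p) * R * I ^ (1 / p) := hrhs
end

section
/- Let (Ω, μ) be a probability measure space and suppose f satisfies the L_∞ Remez inequality with parameters b and R: for every measurable B ⊆ Ω with μ(B) ≤ b, ess sup_Ω |f| ≤ R · ess sup_{Ω∖B} |f|. Then for every 0 < q < ∞, the Nikolskii inequality ‖f‖_{L_∞(Ω)} ≤ R b^{-1/q} ‖f‖_{L_q(Ω)} holds. -/
open MeasureTheory Real Filter

private lemma essSup_zero_measure_real {α : Type*} [MeasurableSpace α] (h : α → ℝ) :
    essSup h (0 : Measure α) = 0 := by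
  simp only [essSup, ae_zero, Filter.limsup, Filter.limsSup, Filter.map_bot,
    Filter.eventually_bot, Set.setOf_true]
  exact Real.sInf_of_not_bddBelow (by simpa using not_bddBelow_univ)

private lemma essSup_le_of_ae_le_real {α : Type*} [MeasurableSpace α] {ν : Measure α}
    (h : α → ℝ) (c : ℝ) (hc : 0 ≤ c) (h0 : ∀ x, 0 ≤ h x) (hle : ∀ᵐ x ∂ν, h x ≤ c) :
    essSup h ν ≤ c := by
  rcases eq_or_ne ν 0 with rfl | hν
  · rw [essSup_zero_measure_real]; exact hc
  · have : NeZero ν := ⟨hν⟩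
    exact Filter.limsup_le_of_le (Filter.isCoboundedUnder_le_of_le _ (x := 0) h0) hle

/-- the L_∞ Remez inequality with parameters b, R implies the
Nikolskii inequality ‖f‖_∞ ≤ R b^{-1/q} ‖f‖_q for every 0 < q < ∞. -/
theorem remez_infty_implies_nikolskii
    {Ω : Type*} [MeasurableSpace Ω] (μ : Measure Ω) [IsProbabilityMeasure μ]
    (f : Ω → ℝ) (b R : ℝ) (hb : 0 < b) (hb1 : b ≤ 1) (hR : 1 ≤ R)
    (hf : MemLp f ⊤ μ)
    (hRem : ∀ B : Set Ω, MeasurableSet B → μ B ≤ ENNReal.ofReal b →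
      essSup (fun x => |f x|) μ ≤ R * essSup (fun x => |f x|) (μ.restrict Bᶜ)) :
    ∀ q : ℝ, 0 < q →
      essSup (fun x => |f x|) μ ≤ R * b ^ (-(1 / q)) * (∫ x, |f x| ^ q ∂μ) ^ (1 / q) := by
  intro q hq
  have hR0 : (0:ℝ) ≤ R := zero_le_one.trans hR
  set g := hf.aestronglyMeasurable.mk f with hg_def
  have hg_sm : StronglyMeasurable g := hf.aestronglyMeasurable.stronglyMeasurable_mk
  have hfg : f =ᵐ[μ] g := hf.aestronglyMeasurable.ae_eq_mk
  have hg_meas : Measurable g := hg_sm.measurable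
  set C := (eLpNormEssSup f μ).toReal with hC_def
  have hC : ∀ᵐ x ∂μ, |f x| ≤ C := by
    have h1 : eLpNormEssSup f μ < ⊤ := by
      have := hf.2; rwa [eLpNorm_exponent_top] at this
    filter_upwards [enorm_ae_le_eLpNormEssSup f μ] with x hx
    have := (ENNReal.toReal_le_toReal (by simp) h1.ne).mpr hx
    simpa [Real.norm_eq_abs] using this
  have hmeas_h : Measurable fun x => |g x| ^ q := hg_meas.abs.pow measurable_const
  have hbound : ∀ᵐ x ∂μ, ‖|g x| ^ q‖ ≤ C ^ q := by
    filter_upwards [hC, hfg] with x h1 h2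
    rw [Real.norm_eq_abs, abs_of_nonneg (Real.rpow_nonneg (abs_nonneg _) q)]
    exact Real.rpow_le_rpow (abs_nonneg _) (h2 ▸ h1) hq.le
  have hint : Integrable (fun x => |g x| ^ q) μ :=
    Integrable.mono' (integrable_const (C ^ q)) hmeas_h.aestronglyMeasurable hbound
  have hIeq : ∫ x, |f x| ^ q ∂μ = ∫ x, |g x| ^ q ∂μ :=
    integral_congr_ae (by filter_upwards [hfg] with x hx; rw [hx])
  set I := ∫ x, |f x| ^ q ∂μ with hI_def
  have hInonneg : 0 ≤ I :=
    integral_nonneg fun x => Real.rpow_nonneg (abs_nonneg _) q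
  rcases hInonneg.eq_or_lt with hI0 | hIpos
  · -- integral is zero : f = 0 a.e.
    have hint' : Integrable (fun x => |f x| ^ q) μ :=
      hint.congr (by filter_upwards [hfg] with x hx; rw [hx])
    have hz : (fun x => |f x| ^ q) =ᵐ[μ] 0 := by
      rw [← integral_eq_zero_iff_of_nonneg_ae
        (Eventually.of_forall fun x => Real.rpow_nonneg (abs_nonneg _) q) hint']
      exact hI0.symm
    have hf0 : (fun x => |f x|) =ᵐ[μ] fun _ => (0:ℝ) := by
      filter_upwards [hz] with x hx
      have : |f x| ^ q = 0 := hx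
      exact (Real.rpow_eq_zero (abs_nonneg _) hq.ne').mp this
    have : NeZero μ := ⟨IsProbabilityMeasure.ne_zero μ⟩
    have hL : essSup (fun x => |f x|) μ = 0 := by
      rw [essSup_congr_ae hf0]; exact essSup_const' 0
    rw [hL, ← hI0, Real.zero_rpow (by positivity : 1/q ≠ 0), mul_zero]
  · -- main case
    set lam := I / b with hlam
    have hlam_pos : 0 < lam := div_pos hIpos hb
    set B := {x | lam ≤ |g x| ^ q} with hB
    have hBmeas : MeasurableSet B := measurableSet_le measurable_const hmeas_h
    have hcheb := mul_meas_ge_le_integral_of_nonneg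
      (Eventually.of_forall fun x => Real.rpow_nonneg (abs_nonneg _) q) hint lam
    have hμB : μ B ≤ ENNReal.ofReal b := by
      rw [ENNReal.le_ofReal_iff_toReal_le (measure_ne_top μ B) hb.le]
      have h2 : lam * (μ B).toReal ≤ I := by rw [hIeq]; exact hcheb
      have h3 : (μ B).toReal ≤ I / lam := by
        rwa [le_div_iff₀ hlam_pos, mul_comm]
      calc (μ B).toReal ≤ I / lam := h3
        _ = b := by rw [hlam]; field_simp
    have hmain := hRem B hBmeas hμB
    have hbound2 : essSup (fun x => |f x|) (μ.restrict Bᶜ) ≤ lam ^ (1/q) := by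
      apply essSup_le_of_ae_le_real _ _ (Real.rpow_nonneg hlam_pos.le _)
        (fun x => abs_nonneg _)
      have hx_mem : ∀ᵐ x ∂(μ.restrict Bᶜ), x ∈ Bᶜ := ae_restrict_mem hBmeas.compl
      have hfg' : f =ᵐ[μ.restrict Bᶜ] g := ae_restrict_of_ae hfg
      filter_upwards [hx_mem, hfg'] with x hx hx2
      have h3 : |g x| ^ q < lam := by
        have : ¬ (lam ≤ |g x| ^ q) := hx
        exact lt_of_not_ge this
      have h4 : |g x| ≤ lam ^ (1/q) := by
        have h5 := Real.rpow_le_rpow (Real.rpow_nonneg (abs_nonneg _) q) h3.le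
          (by positivity : (0:ℝ) ≤ 1/q)
        rw [one_div, Real.rpow_rpow_inv (abs_nonneg _) hq.ne'] at h5
        rwa [one_div]
      rw [hx2]; exact h4
    calc essSup (fun x => |f x|) μ
        ≤ R * essSup (fun x => |f x|) (μ.restrict Bᶜ) := hmain
      _ ≤ R * lam ^ (1/q) := mul_le_mul_of_nonneg_left hbound2 hR0
      _ = R * b ^ (-(1/q)) * I ^ (1/q) := by
          rw [hlam, Real.div_rpow hInonneg hb.le, Real.rpow_neg hb.le]
          ring
end

section
/- Let (Ω, μ) be a probability measure space and suppose an essentially bounded measurable function f satisfies: for every measurable B ⊆ Ω with μ(B) ≤ b, ess sup_Ω |f| ≤ R · ess sup_{Ω∖B} |f|. Then for all 0 < q < p ≤ ∞, setting β = 1/q − 1/p, one has ‖f‖_{L_p(Ω)} ≤ R^{qβ} b^{−β} ‖f‖_{L_q(Ω)}. -/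
open MeasureTheory Real
open scoped ENNReal

/-- Auxiliary: key estimate `‖f‖_∞ ≤ R * b^{-1/q} ‖f‖_q` for finite `q`. -/
theorem remez_key_aux
    {Ω : Type*} [MeasurableSpace Ω] (μ : Measure Ω) [IsProbabilityMeasure μ]
    (f : Ω → ℝ) (b R : ℝ) (hb : 0 < b) (hR : 1 ≤ R)
    (hf : MemLp f ⊤ μ)
    (hRem : ∀ B : Set Ω, MeasurableSet B → μ B ≤ ENNReal.ofReal b →
      eLpNorm f ⊤ μ ≤ ENNReal.ofReal R * eLpNorm f ⊤ (μ.restrict Bᶜ))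
    (q : ℝ≥0∞) (hq_ne : q ≠ 0) (hq_top : q ≠ ⊤) :
    eLpNorm f ⊤ μ ≤ ENNReal.ofReal R * (ENNReal.ofReal b) ^ (-(1 / q.toReal)) *
      eLpNorm f q μ := by
  have hqr : 0 < q.toReal := ENNReal.toReal_pos hq_ne hq_top
  set M := eLpNorm f ⊤ μ with hM
  have hMt : M ≠ ⊤ := hf.2.ne
  have hRpos : (0:ℝ) < R := lt_of_lt_of_le one_pos hR
  have hR0 : ENNReal.ofReal R ≠ 0 := (ENNReal.ofReal_pos.mpr hRpos).ne'
  have hRt : ENNReal.ofReal R ≠ ⊤ := ENNReal.ofReal_ne_top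
  have hb0 : ENNReal.ofReal b ≠ 0 := (ENNReal.ofReal_pos.mpr hb).ne'
  have hbt : ENNReal.ofReal b ≠ ⊤ := ENNReal.ofReal_ne_top
  obtain ⟨g, hgm, hfg⟩ := hf.1
  have hgmeas : Measurable fun x => (‖g x‖₊ : ℝ≥0∞) := hgm.measurable.nnnorm.coe_nnreal_ennreal
  -- measure lower bound
  have hmeas : ∀ c : ℝ≥0∞, c < M / ENNReal.ofReal R →
      ENNReal.ofReal b ≤ μ {x | c < (‖g x‖₊ : ℝ≥0∞)} := by
    intro c hc
    by_contra hlt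
    push_neg at hlt
    set A := {x | c < (‖g x‖₊ : ℝ≥0∞)} with hA_def
    have hA : MeasurableSet A := measurableSet_lt measurable_const hgmeas
    have hbound : eLpNorm f ⊤ (μ.restrict Aᶜ) ≤ c := by
      rw [eLpNorm_exponent_top]
      refine essSup_le_of_ae_le c ?_
      have hfg' : f =ᵐ[μ.restrict Aᶜ] g := ae_restrict_of_ae hfg
      have h2 : ∀ᵐ x ∂μ.restrict Aᶜ, x ∈ Aᶜ :=
        (ae_restrict_iff' hA.compl).2 (ae_of_all _ fun x hx => hx)
      filter_upwards [hfg', h2] with x h1 hx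
      have : ¬ c < (‖g x‖₊ : ℝ≥0∞) := hx
      rw [h1]; exact not_lt.mp this
    have h2 : M ≤ ENNReal.ofReal R * c :=
      (hRem A hA hlt.le).trans (mul_le_mul_right hbound _)
    have h3 : M / ENNReal.ofReal R ≤ c := by
      rw [ENNReal.div_le_iff hR0 hRt, mul_comm]
      exact h2
    exact absurd (hc.trans_le h3) (lt_irrefl c)
  -- key lower bound on ‖f‖_q
  set N := eLpNorm f q μ with hN
  set B := (ENNReal.ofReal b) ^ (1 / q.toReal) with hB
  have hB0 : B ≠ 0 := by
    simp only [hB]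
    exact (ENNReal.rpow_pos (ENNReal.ofReal_pos.mpr hb) hbt).ne'
  have hBt : B ≠ ⊤ := ENNReal.rpow_ne_top_of_nonneg (by positivity) hbt
  have hNint : N = (∫⁻ x, (‖g x‖₊ : ℝ≥0∞) ^ q.toReal ∂μ) ^ (1 / q.toReal) := by
    rw [hN, eLpNorm_congr_ae hfg, eLpNorm_eq_lintegral_rpow_enorm_toReal hq_ne hq_top]; rfl
  have hkey2 : M / ENNReal.ofReal R * B ≤ N := by
    refine le_of_forall_lt_imp_le_of_dense ?_
    intro z hz
    have hcz : z / B < M / ENNReal.ofReal R := by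
      rw [ENNReal.div_lt_iff (Or.inl hB0) (Or.inl hBt)]
      exact hz
    set c := z / B with hc_def
    have hμ : ENNReal.ofReal b ≤ μ {x | c < (‖g x‖₊ : ℝ≥0∞)} := hmeas c hcz
    have hsub : {x | c < (‖g x‖₊ : ℝ≥0∞)} ⊆
        {x | c ^ q.toReal ≤ (‖g x‖₊ : ℝ≥0∞) ^ q.toReal} :=
      fun x hx => ENNReal.rpow_le_rpow (le_of_lt hx) hqr.le
    have hint : c ^ q.toReal * ENNReal.ofReal b ≤
        ∫⁻ x, (‖g x‖₊ : ℝ≥0∞) ^ q.toReal ∂μ := by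
      calc c ^ q.toReal * ENNReal.ofReal b
          ≤ c ^ q.toReal * μ {x | c ^ q.toReal ≤ (‖g x‖₊ : ℝ≥0∞) ^ q.toReal} :=
            mul_le_mul_right (hμ.trans (measure_mono hsub)) _
        _ ≤ ∫⁻ x, (‖g x‖₊ : ℝ≥0∞) ^ q.toReal ∂μ :=
            mul_meas_ge_le_lintegral₀ (hgmeas.pow_const _).aemeasurable _
    have hNge : c * B ≤ N := by
      rw [hNint]
      calc c * B = (c ^ q.toReal * ENNReal.ofReal b) ^ (1 / q.toReal) := by
            rw [ENNReal.mul_rpow_of_nonneg _ _ (by positivity),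
              ← ENNReal.rpow_mul, mul_one_div_cancel hqr.ne', ENNReal.rpow_one, hB]
        _ ≤ (∫⁻ x, (‖g x‖₊ : ℝ≥0∞) ^ q.toReal ∂μ) ^ (1 / q.toReal) :=
            ENNReal.rpow_le_rpow hint (by positivity)
    calc z = c * B := (ENNReal.div_mul_cancel hB0 hBt).symm
      _ ≤ N := hNge
  -- conclude
  have hle : M / ENNReal.ofReal R ≤ N / B := by
    rw [ENNReal.le_div_iff_mul_le (Or.inl hB0) (Or.inl hBt)]
    exact hkey2
  calc M = ENNReal.ofReal R * (M / ENNReal.ofReal R) := by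
        rw [ENNReal.mul_div_cancel hR0 hRt]
    _ ≤ ENNReal.ofReal R * (N / B) := mul_le_mul_right hle _
    _ = ENNReal.ofReal R * (ENNReal.ofReal b) ^ (-(1 / q.toReal)) * N := by
        rw [div_eq_mul_inv, ENNReal.rpow_neg, ← hB]; ring

/-- the L_∞ Remez inequality with parameters b, R implies the
Nikolskii inequality ‖f‖_p ≤ R^{qβ} b^{-β} ‖f‖_q for all 0 < q < p ≤ ∞,
β = 1/q - 1/p. -/
theorem remez_infty_implies_nikolskii_general
    {Ω : Type*} [MeasurableSpace Ω] (μ : Measure Ω) [IsProbabilityMeasure μ]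
    (f : Ω → ℝ) (b R : ℝ) (hb : 0 < b) (hb1 : b ≤ 1) (hR : 1 ≤ R)
    (hf : MemLp f ⊤ μ)
    (hRem : ∀ B : Set Ω, MeasurableSet B → μ B ≤ ENNReal.ofReal b →
      eLpNorm f ⊤ μ ≤ ENNReal.ofReal R * eLpNorm f ⊤ (μ.restrict Bᶜ)) :
    ∀ p q : ℝ≥0∞, 0 < q → q < p →
      eLpNorm f p μ ≤
        ENNReal.ofReal (R ^ (q.toReal * (1 / q.toReal - 1 / p.toReal)) *
          b ^ (-(1 / q.toReal - 1 / p.toReal))) * eLpNorm f q μ := by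
  intro p q hq0 hqp
  have hq_top : q ≠ ⊤ := (hqp.trans_le le_top).ne
  have hq_ne : q ≠ 0 := hq0.ne'
  have hqr : 0 < q.toReal := ENNReal.toReal_pos hq_ne hq_top
  have hRpos : (0:ℝ) < R := lt_of_lt_of_le one_pos hR
  -- trivial case
  by_cases hM0 : eLpNorm f ⊤ μ = 0
  · have hf0 : f =ᵐ[μ] 0 := (eLpNorm_eq_zero_iff hf.1 (by simp)).mp hM0
    simp [eLpNorm_congr_ae hf0]
  set M := eLpNorm f ⊤ μ with hM
  have hMt : M ≠ ⊤ := hf.2.ne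
  set N := eLpNorm f q μ with hN
  have hNle : N ≤ M := eLpNorm_le_eLpNorm_of_exponent_le le_top hf.1
  have hNt : N ≠ ⊤ := (hNle.trans_lt hf.2).ne
  have hN0 : N ≠ 0 := by
    intro h
    exact hM0 (by
      have hf0 : f =ᵐ[μ] 0 := (eLpNorm_eq_zero_iff hf.1 hq_ne).mp h
      rw [hM, eLpNorm_congr_ae hf0, eLpNorm_zero])
  set β := 1 / q.toReal - 1 / p.toReal with hβ
  have key : M ≤ ENNReal.ofReal R * (ENNReal.ofReal b) ^ (-(1 / q.toReal)) * N :=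
    remez_key_aux μ f b R hb hR hf hRem q hq_ne hq_top
  rcases eq_or_ne p ⊤ with hp | hp
  · -- p = ∞
    subst hp
    have hβval : β = 1 / q.toReal := by simp [hβ]
    have hRHS : ENNReal.ofReal (R ^ (q.toReal * β) * b ^ (-β)) =
        ENNReal.ofReal R * (ENNReal.ofReal b) ^ (-(1 / q.toReal)) := by
      rw [hβval, mul_one_div_cancel hqr.ne', Real.rpow_one,
        ENNReal.ofReal_mul hRpos.le, ENNReal.ofReal_rpow_of_pos hb]
    rw [hRHS]
    exact key
  · -- p finite
    have hp_ne : p ≠ 0 := (hq0.trans hqp).ne'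
    have hpr : 0 < p.toReal := ENNReal.toReal_pos hp_ne hp
    have hqp' : q.toReal < p.toReal := (ENNReal.toReal_lt_toReal hq_top hp).mpr hqp
    obtain ⟨g, hgm, hfg⟩ := hf.1
    have hgmeas : Measurable fun x => (‖g x‖₊ : ℝ≥0∞) := hgm.measurable.nnnorm.coe_nnreal_ennreal
    have hMg : eLpNormEssSup g μ = M := by
      rw [hM, eLpNorm_exponent_top, eLpNormEssSup_congr_ae hfg.symm]
    -- interpolation
    have hae : ∀ᵐ x ∂μ, (‖g x‖₊ : ℝ≥0∞) ^ p.toReal ≤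
        M ^ (p.toReal - q.toReal) * (‖g x‖₊ : ℝ≥0∞) ^ q.toReal := by
      filter_upwards [ae_le_eLpNormEssSup (f := g) (μ := μ)] with x hx
      have hx' : (‖g x‖₊ : ℝ≥0∞) ≤ M := by rw [← hMg]; exact_mod_cast hx
      calc (‖g x‖₊ : ℝ≥0∞) ^ p.toReal
          = (‖g x‖₊ : ℝ≥0∞) ^ (p.toReal - q.toReal) * (‖g x‖₊ : ℝ≥0∞) ^ q.toReal := by
            rw [← ENNReal.rpow_add_of_nonneg _ _ (by linarith) hqr.le]
            norm_num
        _ ≤ M ^ (p.toReal - q.toReal) * (‖g x‖₊ : ℝ≥0∞) ^ q.toReal :=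
            mul_le_mul_left (ENNReal.rpow_le_rpow hx' (by linarith)) _
    have hMexp_ne_top : M ^ (p.toReal - q.toReal) ≠ ⊤ :=
      ENNReal.rpow_ne_top_of_nonneg (by linarith) hMt
    have hNq : (∫⁻ x, (‖g x‖₊ : ℝ≥0∞) ^ q.toReal ∂μ) = N ^ q.toReal := by
      rw [hN, eLpNorm_congr_ae hfg, eLpNorm_eq_lintegral_rpow_enorm_toReal hq_ne hq_top,
        ← ENNReal.rpow_mul, one_div_mul_cancel hqr.ne', ENNReal.rpow_one]; rfl
    have hinterp : eLpNorm f p μ ≤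
        M ^ ((p.toReal - q.toReal) / p.toReal) * N ^ (q.toReal / p.toReal) := by
      rw [eLpNorm_congr_ae hfg, eLpNorm_eq_lintegral_rpow_enorm_toReal hp_ne hp]
      calc (∫⁻ x, (‖g x‖₊ : ℝ≥0∞) ^ p.toReal ∂μ) ^ (1 / p.toReal)
          ≤ (∫⁻ x, M ^ (p.toReal - q.toReal) * (‖g x‖₊ : ℝ≥0∞) ^ q.toReal ∂μ)
              ^ (1 / p.toReal) :=
            ENNReal.rpow_le_rpow (lintegral_mono_ae hae) (by positivity)
        _ = (M ^ (p.toReal - q.toReal) * N ^ q.toReal) ^ (1 / p.toReal) := by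
            rw [lintegral_const_mul' _ _ hMexp_ne_top, hNq]
        _ = M ^ ((p.toReal - q.toReal) / p.toReal) * N ^ (q.toReal / p.toReal) := by
            rw [ENNReal.mul_rpow_of_nonneg _ _ (by positivity),
              ← ENNReal.rpow_mul, ← ENNReal.rpow_mul]
            ring_nf
    -- combine
    set K := ENNReal.ofReal R * (ENNReal.ofReal b) ^ (-(1 / q.toReal)) with hK
    have hθ : (p.toReal - q.toReal) / p.toReal = q.toReal * β := by
      rw [hβ]; field_simp
    have hcomb : eLpNorm f p μ ≤ K ^ (q.toReal * β) * N := by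
      have h1 : M ^ ((p.toReal - q.toReal) / p.toReal) ≤
          (K * N) ^ ((p.toReal - q.toReal) / p.toReal) :=
        ENNReal.rpow_le_rpow key (div_nonneg (by linarith) hpr.le)
      calc eLpNorm f p μ
          ≤ M ^ ((p.toReal - q.toReal) / p.toReal) * N ^ (q.toReal / p.toReal) := hinterp
        _ ≤ (K * N) ^ ((p.toReal - q.toReal) / p.toReal) * N ^ (q.toReal / p.toReal) :=
            mul_le_mul_left h1 _
        _ = K ^ ((p.toReal - q.toReal) / p.toReal) *
              (N ^ ((p.toReal - q.toReal) / p.toReal) * N ^ (q.toReal / p.toReal)) := by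
            rw [ENNReal.mul_rpow_of_nonneg _ _ (div_nonneg (by linarith) hpr.le)]; ring
        _ = K ^ (q.toReal * β) * N := by
            have hsum : (p.toReal - q.toReal) / p.toReal + q.toReal / p.toReal = 1 := by
              rw [← add_div, sub_add_cancel, div_self hpr.ne']
            rw [← ENNReal.rpow_add _ _ hN0 hNt, hsum, ENNReal.rpow_one, hθ]
    -- identify the constants
    have hβ0 : 0 ≤ β := by
      rw [hβ]
      have : 1 / p.toReal ≤ 1 / q.toReal := one_div_le_one_div_of_le hqr hqp'.le
      linarith
    have hconst : K ^ (q.toReal * β) =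
        ENNReal.ofReal (R ^ (q.toReal * β) * b ^ (-β)) := by
      have hexp : -(1 / q.toReal) * (q.toReal * β) = -β := by
        field_simp
      rw [hK, ENNReal.mul_rpow_of_nonneg _ _ (by positivity), ← ENNReal.rpow_mul, hexp,
        ENNReal.ofReal_mul (by positivity), ENNReal.ofReal_rpow_of_pos hRpos,
        ENNReal.ofReal_rpow_of_pos hb]
    exact hcomb.trans_eq (by rw [hconst])
end

section
/- Let (Ω, μ) be a probability measure space, 0 < q < p < ∞, and suppose f satisfies the L_p Remez inequality with parameters b and R: for every measurable B ⊆ Ω with μ(B) ≤ b, ‖f‖_{L_p(Ω)} ≤ R ‖f‖_{L_p(Ω∖B)}. Then the Nikolskii-type inequality ‖f‖_{L_p(Ω)} ≤ R b^{−β} ‖f‖_{L_q(Ω)} holds with β = 1/q − 1/p. -/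
open MeasureTheory Real

/-- the L_p Remez inequality with parameters b, R implies the
Nikolskii inequality ‖f‖_p ≤ R b^{-β} ‖f‖_q, β = 1/q - 1/p, for 0 < q < p < ∞. -/
theorem remez_p_implies_nikolskii
    {Ω : Type*} [MeasurableSpace Ω] (μ : Measure Ω) [IsProbabilityMeasure μ]
    (f : Ω → ℝ) (p q : ℝ) (hq : 0 < q) (hqp : q < p) (b R : ℝ)
    (hb : 0 < b) (hb1 : b ≤ 1) (hR : 1 < R)
    (hf : MemLp f (ENNReal.ofReal p) μ)
    (hRem : ∀ B : Set Ω, MeasurableSet B → μ B ≤ ENNReal.ofReal b →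
      (∫ x, |f x| ^ p ∂μ) ^ (1 / p) ≤ R * (∫ x in Bᶜ, |f x| ^ p ∂μ) ^ (1 / p)) :
    (∫ x, |f x| ^ p ∂μ) ^ (1 / p) ≤
      R * b ^ (-(1 / q - 1 / p)) * (∫ x, |f x| ^ q ∂μ) ^ (1 / q) := by
  have hp : 0 < p := hq.trans hqp
  have hR0 : (0:ℝ) ≤ R := le_of_lt (lt_trans one_pos hR)
  set I : ℝ := ∫ x, |f x| ^ q ∂μ with hI_def
  have hInn : 0 ≤ᵐ[μ] fun x => |f x| ^ q := .of_forall fun x => by positivity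
  have hfq : MemLp f (ENNReal.ofReal q) μ :=
    hf.mono_exponent (ENNReal.ofReal_le_ofReal hqp.le)
  have hintq : Integrable (fun x => |f x| ^ q) μ := by
    have := hfq.integrable_norm_rpow (by simp [hq]) (by simp)
    simpa [ENNReal.toReal_ofReal hq.le, Real.norm_eq_abs] using this
  have hintp : Integrable (fun x => |f x| ^ p) μ := by
    have := hf.integrable_norm_rpow (by simp [hp]) (by simp)
    simpa [ENNReal.toReal_ofReal hp.le, Real.norm_eq_abs] using this
  have hI0 : 0 ≤ I := integral_nonneg fun x => by positivity
  rcases eq_or_lt_of_le hI0 with hI | hI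
  · -- degenerate case: f = 0 a.e.
    have hf0 : ∀ᵐ x ∂μ, |f x| ^ q = 0 :=
      (integral_eq_zero_iff_of_nonneg_ae hInn hintq).mp hI.symm
    have hf0' : (fun x => |f x| ^ p) =ᵐ[μ] 0 := by
      filter_upwards [hf0] with x hx
      have hfx : |f x| = 0 := by
        by_contra h
        exact h (by
          have := (Real.rpow_eq_zero (abs_nonneg _) hq.ne').mp hx
          exact this)
      simp [hfx, Real.zero_rpow hp.ne']
    have hIp : (∫ x, |f x| ^ p ∂μ) = 0 := by
      rw [integral_congr_ae hf0']; simp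
    rw [hIp, Real.zero_rpow (one_div_ne_zero hp.ne'), ← hI,
      Real.zero_rpow (one_div_ne_zero hq.ne'), mul_zero]
  · -- main case
    set g : Ω → ℝ := hf.1.mk f with hg_def
    have hgm : StronglyMeasurable g := hf.1.stronglyMeasurable_mk
    have hfg : f =ᵐ[μ] g := hf.1.ae_eq_mk
    have habsq : (fun x => |f x| ^ q) =ᵐ[μ] fun x => |g x| ^ q := by
      filter_upwards [hfg] with x hx; rw [hx]
    have habsp : (fun x => |f x| ^ p) =ᵐ[μ] fun x => |g x| ^ p := by
      filter_upwards [hfg] with x hx; rw [hx]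
    have hintq_g : Integrable (fun x => |g x| ^ q) μ := hintq.congr habsq
    have hintp_g : Integrable (fun x => |g x| ^ p) μ := hintp.congr habsp
    have hIg : (∫ x, |g x| ^ q ∂μ) = I := (integral_congr_ae habsq).symm
    set t : ℝ := (I / b) ^ (1 / q) with ht_def
    have hIb : 0 < I / b := div_pos hI hb
    have ht : 0 < t := Real.rpow_pos_of_pos hIb _
    have htq : t ^ q = I / b := by
      rw [ht_def, ← Real.rpow_mul hIb.le, one_div_mul_cancel hq.ne', Real.rpow_one]
    set B : Set Ω := {x | t < |g x|} with hB_def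
    have hB : MeasurableSet B := measurableSet_lt measurable_const hgm.measurable.abs
    have hmuB : μ B ≤ ENNReal.ofReal b := by
      have hfin : μ B ≠ ⊤ := (measure_lt_top μ B).ne
      have hkey : t ^ q * (μ B).toReal ≤ I := by
        calc t ^ q * (μ B).toReal = ∫ _ in B, t ^ q ∂μ := by
              rw [setIntegral_const]; rw [smul_eq_mul]; rw [measureReal_def]; ring
          _ ≤ ∫ x in B, |g x| ^ q ∂μ := by
              refine setIntegral_mono_on (integrableOn_const (measure_lt_top μ B).ne)
                hintq_g.integrableOn hB fun x hx => ?_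
              exact Real.rpow_le_rpow ht.le (le_of_lt hx) hq.le
          _ ≤ ∫ x, |g x| ^ q ∂μ := by
              refine setIntegral_le_integral hintq_g ?_
              filter_upwards with x; positivity
          _ = I := hIg
      rw [htq] at hkey
      have htoReal : (μ B).toReal ≤ b := by
        by_contra h
        push_neg at h
        have h2 : I / b * b < I / b * (μ B).toReal := mul_lt_mul_of_pos_left h hIb
        rw [div_mul_cancel₀ _ hb.ne'] at h2
        linarith
      exact (ENNReal.le_ofReal_iff_toReal_le hfin hb.le).mpr htoReal
    have hRem' := hRem B hB hmuB
    -- bound the integral over Bᶜ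
    have hBc : (∫ x in Bᶜ, |f x| ^ p ∂μ) ≤ t ^ (p - q) * I := by
      have h1 : (∫ x in Bᶜ, |f x| ^ p ∂μ) = ∫ x in Bᶜ, |g x| ^ p ∂μ :=
        integral_congr_ae (ae_restrict_of_ae habsp)
      rw [h1]
      calc (∫ x in Bᶜ, |g x| ^ p ∂μ)
          ≤ ∫ x in Bᶜ, t ^ (p - q) * |g x| ^ q ∂μ := by
            refine setIntegral_mono_on hintp_g.integrableOn
              (hintq_g.const_mul _).integrableOn hB.compl fun x hx => ?_
            have hxt : |g x| ≤ t := not_lt.mp hx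
            have : |g x| ^ p = |g x| ^ (p - q) * |g x| ^ q := by
              rw [← Real.rpow_add' (abs_nonneg _) (by simpa using hp.ne')]
              ring_nf
            rw [this]
            exact mul_le_mul_of_nonneg_right
              (Real.rpow_le_rpow (abs_nonneg _) hxt (by linarith)) (by positivity)
        _ = t ^ (p - q) * ∫ x in Bᶜ, |g x| ^ q ∂μ := by rw [integral_const_mul]
        _ ≤ t ^ (p - q) * I := by
            refine mul_le_mul_of_nonneg_left ?_ (by positivity)
            rw [← hIg]
            refine setIntegral_le_integral hintq_g ?_
            filter_upwards with x; positivity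
    have hkey : (t ^ (p - q) * I) ^ (1 / p) = b ^ (-(1 / q - 1 / p)) * I ^ (1 / q) := by
      rw [ht_def, ← Real.rpow_mul hIb.le, Real.div_rpow hI.le hb.le, div_eq_mul_inv,
        ← Real.rpow_neg hb.le, mul_right_comm, ← Real.rpow_add_one hI.ne',
        Real.mul_rpow (by positivity) (by positivity),
        ← Real.rpow_mul hI.le, ← Real.rpow_mul hb.le, mul_comm]
      have e1 : -(1 / q * (p - q)) * (1 / p) = -(1 / q - 1 / p) := by
        field_simp
      have e2 : (1 / q * (p - q) + 1) * (1 / p) = 1 / q := by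
        field_simp; ring
      rw [e1, e2]
    calc (∫ x, |f x| ^ p ∂μ) ^ (1 / p)
        ≤ R * (∫ x in Bᶜ, |f x| ^ p ∂μ) ^ (1 / p) := hRem'
      _ ≤ R * (t ^ (p - q) * I) ^ (1 / p) := by
          refine mul_le_mul_of_nonneg_left
            (Real.rpow_le_rpow (setIntegral_nonneg hB.compl fun x _ => by positivity)
              hBc (by positivity)) hR0
      _ = R * b ^ (-(1 / q - 1 / p)) * I ^ (1 / q) := by rw [hkey]; ring
end

section
/- Let (Ω, μ) be a probability measure space, 1 ≤ q < p ≤ ∞, β = 1/q − 1/p, and suppose f satisfies the Nikolskii inequality ‖f‖_{L_p(Ω)} ≤ K ‖f‖_{L_q(Ω)} for some constant K > 0. Then for every measurable set B ⊆ Ω with μ(B) ≤ (2K)^{−1/β}, one has ‖f‖_{L_q(Ω)} ≤ 2 ‖f‖_{L_q(Ω∖B)}. -/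
open MeasureTheory Real
open scoped ENNReal

/-- the Nikolskii inequality ‖f‖_p ≤ K ‖f‖_q (1 ≤ q < p ≤ ∞) implies
the L_q Remez inequality with parameters (2K)^{-1/β} and 2, where β = 1/q - 1/p. -/
theorem nikolskii_implies_remez
    {Ω : Type*} [MeasurableSpace Ω] (μ : Measure Ω) [IsProbabilityMeasure μ]
    (f : Ω → ℝ) (p q : ℝ≥0∞) (hq : 1 ≤ q) (hqp : q < p) (K : ℝ) (hK : 0 < K)
    (hf : MemLp f p μ)
    (hN : eLpNorm f p μ ≤ ENNReal.ofReal K * eLpNorm f q μ) :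
    ∀ B : Set Ω, MeasurableSet B →
      μ B ≤ ENNReal.ofReal ((2 * K) ^ (-(1 / (1 / q.toReal - 1 / p.toReal)))) →
      eLpNorm f q μ ≤ 2 * eLpNorm f q (μ.restrict Bᶜ) := by
  intro B hB hμB
  have hq0 : q ≠ 0 := fun h => by simp [h] at hq
  have hqtop : q ≠ ∞ := (hqp.trans_le le_top).ne
  have hqr : 0 < q.toReal := ENNReal.toReal_pos hq0 hqtop
  set β : ℝ := 1 / q.toReal - 1 / p.toReal with hβ
  have hβpos : 0 < β := by
    rcases eq_or_ne p ∞ with hp | hp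
    · simp [hβ, hp]; positivity
    · have hpr : 0 < p.toReal :=
        ENNReal.toReal_pos (fun h => by simp [h] at hqp) hp
      have hlt : q.toReal < p.toReal := (ENNReal.toReal_lt_toReal hqtop hp).mpr hqp
      exact sub_pos.mpr (one_div_lt_one_div_of_lt hqr hlt)
  have h2K : (0:ℝ) < 2 * K := by linarith
  have hfq : MemLp f q μ := hf.mono_exponent hqp.le
  have hNfin : eLpNorm f q μ ≠ ∞ := hfq.eLpNorm_ne_top
  -- split
  have hsplit : eLpNorm f q μ ≤ eLpNorm f q (μ.restrict B) + eLpNorm f q (μ.restrict Bᶜ) := by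
    have h1 : eLpNorm f q (μ.restrict B) = eLpNorm (B.indicator f) q μ :=
      (eLpNorm_indicator_eq_eLpNorm_restrict hB).symm
    have h2 : eLpNorm f q (μ.restrict Bᶜ) = eLpNorm (Bᶜ.indicator f) q μ :=
      (eLpNorm_indicator_eq_eLpNorm_restrict hB.compl).symm
    rw [h1, h2]
    have hfeq : f = B.indicator f + Bᶜ.indicator f := by
      ext x; by_cases hx : x ∈ B <;> simp [Set.indicator, hx]
    calc eLpNorm f q μ = eLpNorm (B.indicator f + Bᶜ.indicator f) q μ := by rw [← hfeq]
      _ ≤ _ := eLpNorm_add_le (hfq.aestronglyMeasurable.indicator hB)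
          (hfq.aestronglyMeasurable.indicator hB.compl) hq
  -- Hölder
  have hHolder : eLpNorm f q (μ.restrict B) ≤ eLpNorm f p μ * (μ B) ^ β := by
    calc eLpNorm f q (μ.restrict B)
        ≤ eLpNorm f p (μ.restrict B) * (μ.restrict B Set.univ) ^ β :=
          eLpNorm_le_eLpNorm_mul_rpow_measure_univ hqp.le hf.aestronglyMeasurable.restrict
      _ ≤ eLpNorm f p μ * (μ B) ^ β := by
          rw [Measure.restrict_apply_univ]
          gcongr
          exact Measure.restrict_le_self
  -- measure bound
  have hμβ : (μ B) ^ β ≤ ENNReal.ofReal ((2*K)⁻¹) := by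
    calc (μ B) ^ β ≤ (ENNReal.ofReal ((2*K) ^ (-(1/β)))) ^ β :=
          ENNReal.rpow_le_rpow hμB hβpos.le
      _ = ENNReal.ofReal (((2*K) ^ (-(1/β))) ^ β) :=
          ENNReal.ofReal_rpow_of_pos (Real.rpow_pos_of_pos h2K _)
      _ = ENNReal.ofReal ((2*K)⁻¹) := by
          rw [← Real.rpow_mul h2K.le]
          congr 1
          rw [show -(1/β) * β = -1 by field_simp, Real.rpow_neg_one]
  -- combine
  have hhalf : eLpNorm f p μ * (μ B) ^ β ≤ eLpNorm f q μ / 2 := by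
    calc eLpNorm f p μ * (μ B) ^ β
        ≤ (ENNReal.ofReal K * eLpNorm f q μ) * ENNReal.ofReal ((2*K)⁻¹) := by gcongr
      _ = (ENNReal.ofReal K * ENNReal.ofReal ((2*K)⁻¹)) * eLpNorm f q μ := by ring
      _ = ENNReal.ofReal (K * (2*K)⁻¹) * eLpNorm f q μ := by
          rw [ENNReal.ofReal_mul hK.le]
      _ = ENNReal.ofReal (2⁻¹) * eLpNorm f q μ := by
          congr 2
          field_simp
      _ = eLpNorm f q μ / 2 := by
          rw [show ((2:ℝ)⁻¹) = 1/2 by norm_num, ENNReal.ofReal_div_of_pos (by norm_num)]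
          simp [ENNReal.div_eq_inv_mul]
  have hkey : eLpNorm f q μ ≤ eLpNorm f q μ / 2 + eLpNorm f q (μ.restrict Bᶜ) :=
    hsplit.trans (add_le_add (hHolder.trans hhalf) le_rfl)
  have h2 : eLpNorm f q μ / 2 ≤ eLpNorm f q (μ.restrict Bᶜ) := by
    have := hkey
    nth_rewrite 1 [← ENNReal.add_halves (eLpNorm f q μ)] at this
    exact (ENNReal.add_le_add_iff_left (by
      simp [ENNReal.div_eq_top, hNfin])).mp this
  calc eLpNorm f q μ = 2 * (eLpNorm f q μ / 2) := by
        rw [ENNReal.mul_div_cancel' (by norm_num) (by norm_num)]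
    _ ≤ 2 * eLpNorm f q (μ.restrict Bᶜ) := by gcongr
end

section
/- Let f be a continuous 2π-periodic function on the torus 𝕋^d with normalized Haar (Lebesgue) measure μ, and suppose there exist points x^1, …, x^m ∈ 𝕋^d and a constant D such that for every y ∈ 𝕋^d the translated function f_y(x) = f(x − y) satisfies ‖f_y‖_∞ ≤ D max_{1≤j≤m} |f_y(x^j)|. Then for every measurable set B ⊆ 𝕋^d with μ(B) < 1/m, one has ‖f‖_∞ ≤ D sup_{x ∈ 𝕋^d ∖ B} |f(x)|. -/
open MeasureTheory Real
open scoped ENNReal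

/-- a discretization inequality for all translates of a continuous
function f on the torus 𝕋^d implies a Remez-type inequality for f. -/
theorem discretization_implies_remez
    {d : ℕ} (μ : Measure (Fin d → AddCircle (2 * π))) [IsProbabilityMeasure μ]
    [μ.IsAddLeftInvariant] [μ.IsNegInvariant]
    (f : (Fin d → AddCircle (2 * π)) → ℝ) (hf : Continuous f)
    (m : ℕ) (x : Fin m → (Fin d → AddCircle (2 * π))) (D : ℝ)
    (hD : ∀ y : Fin d → AddCircle (2 * π),
      (⨆ z, |f (z - y)|) ≤ D * ⨆ j, |f (x j - y)|) :
    ∀ B : Set (Fin d → AddCircle (2 * π)), MeasurableSet B → μ B < 1 / (m : ℝ≥0∞) →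
      (⨆ z, |f z|) ≤ D * ⨆ u ∈ Bᶜ, |f u| := by
  haveI : Fact (0 < 2*π) := ⟨by positivity⟩
  intro B hB hμB
  -- boundedness
  obtain ⟨C, hC⟩ : ∃ C, ∀ z, |f z| ≤ C := by
    obtain ⟨z₀, -, hz₀⟩ := isCompact_univ.exists_isMaxOn Set.univ_nonempty
      (hf.abs.continuousOn (s := Set.univ))
    exact ⟨|f z₀|, fun z => hz₀ (Set.mem_univ z)⟩
  have hC0 : 0 ≤ C := le_trans (abs_nonneg _) (hC 0)
  have hbdd : BddAbove (Set.range fun z => |f z|) := ⟨C, by rintro a ⟨z, rfl⟩; exact hC z⟩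
  have hS0 : 0 ≤ ⨆ z, |f z| := le_ciSup_of_le hbdd 0 (abs_nonneg _)
  have hmem : ∀ u : Fin d → AddCircle (2*π), u ∈ Bᶜ →
      (⨆ _ : u ∈ Bᶜ, |f u|) = |f u| := fun u hu => by
    haveI : Nonempty (u ∈ Bᶜ) := ⟨hu⟩
    exact ciSup_const
  have hnot : ∀ u : Fin d → AddCircle (2*π), u ∉ Bᶜ →
      (⨆ _ : u ∈ Bᶜ, |f u|) = 0 := fun u hu => by
    haveI : IsEmpty (u ∈ Bᶜ) := ⟨hu⟩
    exact Real.iSup_of_isEmpty _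
  have hbdd' : BddAbove (Set.range fun u => ⨆ _ : u ∈ Bᶜ, |f u|) := by
    refine ⟨C, ?_⟩
    rintro a ⟨u, rfl⟩
    show (⨆ _ : u ∈ Bᶜ, |f u|) ≤ C
    by_cases hu : u ∈ Bᶜ
    · rw [hmem u hu]; exact hC u
    · rw [hnot u hu]; exact hC0
  -- trivial case: f ≡ 0
  by_cases hf0 : ∀ z, f z = 0
  · have h1 : (⨆ z, |f z|) = 0 := by simp [hf0]
    have h2 : (⨆ u ∈ Bᶜ, |f u|) = 0 := by
      refine le_antisymm (ciSup_le fun u => ?_) ?_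
      · by_cases hu : u ∈ Bᶜ
        · rw [hmem u hu]; simp [hf0]
        · rw [hnot u hu]
      · refine le_ciSup_of_le hbdd' 0 ?_
        by_cases hu : (0 : Fin d → AddCircle (2*π)) ∈ Bᶜ
        · rw [hmem 0 hu]; simp [hf0]
        · rw [hnot 0 hu]
    rw [h1, h2, mul_zero]
  -- nontrivial case
  push_neg at hf0
  obtain ⟨z₁, hz₁⟩ := hf0
  have hSpos : 0 < ⨆ z, |f z| :=
    lt_of_lt_of_le (abs_pos.mpr hz₁) (le_ciSup hbdd z₁)
  have hm : m ≠ 0 := by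
    rintro rfl
    have h1 := hD 0
    rw [Real.iSup_of_isEmpty (fun j : Fin 0 => |f (x j - 0)|), mul_zero] at h1
    simp only [sub_zero] at h1
    exact absurd (lt_of_lt_of_le hSpos h1) (lt_irrefl 0)
  haveI : Nonempty (Fin m) := ⟨⟨0, Nat.pos_of_ne_zero hm⟩⟩
  have hD0 : 0 ≤ D := by
    by_contra hneg
    push_neg at hneg
    have h1 := hD 0
    have h2 : 0 ≤ ⨆ j, |f (x j - 0)| := by
      refine le_ciSup_of_le ⟨C, ?_⟩ (Classical.arbitrary (Fin m)) (abs_nonneg _)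
      rintro a ⟨j, rfl⟩; exact hC _
    have h3 : (⨆ z, |f (z - 0)|) ≤ 0 := le_trans h1 (mul_nonpos_of_nonpos_of_nonneg hneg.le h2)
    simp only [sub_zero] at h3
    exact absurd (lt_of_lt_of_le hSpos h3) (lt_irrefl 0)
  -- find good y
  set A : Fin m → Set (Fin d → AddCircle (2*π)) := fun j => (fun y => x j - y) ⁻¹' B with hA
  have hAm : ∀ j, μ (A j) = μ B := by
    intro j
    have heq : (fun y => x j - y) = (fun z => x j + z) ∘ Neg.neg := by
      funext y; simp [sub_eq_add_neg]
    rw [hA]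
    simp only [heq, Set.preimage_comp]
    rw [Measure.measure_preimage_neg, measure_preimage_add]
  have hunion : μ (⋃ j, A j) < 1 := by
    calc μ (⋃ j, A j) ≤ ∑' j, μ (A j) := measure_iUnion_le _
    _ = m * μ B := by
        rw [tsum_fintype]
        simp [hAm, Finset.sum_const, Finset.card_univ, nsmul_eq_mul]
    _ < m * (1 / m) := by
        rw [ENNReal.mul_lt_mul_iff_right (by exact_mod_cast hm) (ENNReal.natCast_ne_top m)]
        exact hμB
    _ = 1 := by
        rw [one_div, ENNReal.mul_inv_cancel (by exact_mod_cast hm) (ENNReal.natCast_ne_top m)]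
  obtain ⟨y, hy⟩ : ∃ y, y ∉ ⋃ j, A j := by
    by_contra h
    push_neg at h
    rw [Set.eq_univ_of_forall h, measure_univ] at hunion
    exact absurd hunion (lt_irrefl 1)
  have hyj : ∀ j, x j - y ∈ Bᶜ := fun j hmem => hy (Set.mem_iUnion.mpr ⟨j, hmem⟩)
  have hrange : (⨆ z, |f z|) = ⨆ z, |f (z - y)| := by
    rw [iSup, iSup]
    congr 1
    ext a
    constructor
    · rintro ⟨z, rfl⟩; exact ⟨z + y, by simp⟩
    · rintro ⟨z, rfl⟩; exact ⟨z - y, rfl⟩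
  calc (⨆ z, |f z|) = ⨆ z, |f (z - y)| := hrange
  _ ≤ D * ⨆ j, |f (x j - y)| := hD y
  _ ≤ D * ⨆ u ∈ Bᶜ, |f u| := by
      refine mul_le_mul_of_nonneg_left (ciSup_le fun j => ?_) hD0
      refine le_ciSup_of_le hbdd' (x j - y) ?_
      rw [hmem _ (hyj j)]
end

section
/- Let Γ(N) = {k ∈ ℤ^d : ∏_{j=1}^d max(1, |k_j|) ≤ N} be the hyperbolic cross and 𝒯(N) the space of trigonometric polynomials with frequencies in Γ(N). Suppose V is a (de la Vallée Poussin type) kernel with ‖V‖_{L_1(𝕋^d)} ≤ C' and ‖V‖_{L_∞(𝕋^d)} ≤ C'' such that f = f * V for all f ∈ 𝒯(N). Then for every measurable set B ⊆ 𝕋^d with normalized measure |B| ≤ (2C'')^{−1} and every f ∈ 𝒯(N), one has ‖f‖_∞ ≤ 2C' · sup_{u ∈ 𝕋^d ∖ B} |f(u)|. -/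
open MeasureTheory Real
open scoped ENNReal

namespace RemezHC

noncomputable section

instance : Fact (0 < 2 * π) := ⟨by positivity⟩

variable {d : ℕ}

/-- The d-dimensional torus 𝕋^d. -/
abbrev Torus (d : ℕ) := Fin d → AddCircle (2 * π)

/-- Normalized (probability) Haar measure on 𝕋^d. -/
def torusMeasure (d : ℕ) : Measure (Torus d) :=
  Measure.pi fun _ => AddCircle.haarAddCircle

/-- Membership in the space 𝒯(N) of trigonometric polynomials with frequencies
in the hyperbolic cross Γ(N) = {k : ∏ⱼ max(1, |kⱼ|) ≤ N}. -/
def IsHCPoly (d N : ℕ) (f : Torus d → ℂ) : Prop :=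
  ∃ (S : Finset (Fin d → ℤ)) (c : (Fin d → ℤ) → ℂ),
    (∀ k ∈ S, (∏ j, max 1 |k j| : ℤ) ≤ (N : ℤ)) ∧
    f = fun x => ∑ k ∈ S, c k * ∏ j, fourier (k j) (x j)

theorem norm_fourier (n : ℤ) (y : AddCircle (2 * π)) : ‖fourier n y‖ = 1 := by
  rw [fourier_apply]
  exact Circle.norm_coe (AddCircle.toCircle (n • y))

/-- Remez inequality for hyperbolic cross polynomials via a
reproducing de la Vallée Poussin type kernel. -/
theorem remez_hyperbolic_cross
    (N : ℕ) (f : Torus d → ℂ) (hf : IsHCPoly d N f)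
    (V : Torus d → ℂ) (C' C'' : ℝ) (hC' : 0 < C') (hC'' : 0 < C'')
    (hV1 : ∫ u, ‖V u‖ ∂(torusMeasure d) ≤ C')
    (hVinf : ∀ u, ‖V u‖ ≤ C'')
    (hrep : ∀ g : Torus d → ℂ, IsHCPoly d N g →
      ∀ x, g x = ∫ u, g u * V (x - u) ∂(torusMeasure d))
    (B : Set (Torus d)) (hB : MeasurableSet B)
    (hBm : torusMeasure d B ≤ ENNReal.ofReal (1 / (2 * C''))) :
    (⨆ x, ‖f x‖) ≤ 2 * C' * ⨆ u ∈ Bᶜ, ‖f u‖ := by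
  haveI : IsProbabilityMeasure (torusMeasure d) := by unfold torusMeasure; infer_instance
  haveI hni : (torusMeasure d).IsNegInvariant := Measure.pi.isNegInvariant _
  haveI hli : (torusMeasure d).IsAddLeftInvariant := Measure.pi.isAddLeftInvariant _
  obtain ⟨S, c, hS, hfe⟩ := hf
  -- supremum notation
  set m := ⨆ u ∈ Bᶜ, ‖f u‖ with hm
  set M := ⨆ x, ‖f x‖ with hM
  have hm0 : 0 ≤ m := Real.iSup_nonneg fun u => Real.iSup_nonneg fun _ => norm_nonneg _
  -- uniform bound on f
  have hfb : ∀ x, ‖f x‖ ≤ ∑ k ∈ S, ‖c k‖ := by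
    intro x
    rw [hfe]
    refine (norm_sum_le _ _).trans (le_of_eq (Finset.sum_congr rfl fun k _ => ?_))
    rw [norm_mul, norm_prod]
    simp [norm_fourier, Circle.norm_coe]
  have hbdd : BddAbove (Set.range fun x => ‖f x‖) :=
    ⟨∑ k ∈ S, ‖c k‖, Set.forall_mem_range.2 hfb⟩
  have hMle : ∀ x, ‖f x‖ ≤ M := fun x => le_ciSup hbdd x
  have hM0 : 0 ≤ M := le_trans (norm_nonneg _) (hMle 0)
  have hmle : ∀ u, u ∉ B → ‖f u‖ ≤ m := by
    intro u hu
    have h1 : (⨆ _ : u ∈ Bᶜ, ‖f u‖) = ‖f u‖ := ciSup_pos hu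
    rw [← h1]
    refine le_ciSup (f := fun u => ⨆ _ : u ∈ Bᶜ, ‖f u‖) ?_ u
    refine ⟨∑ k ∈ S, ‖c k‖, Set.forall_mem_range.2 fun v => ?_⟩
    exact Real.iSup_le (fun _ => hfb v) (le_trans (norm_nonneg _) (hfb v))
  rcases Nat.eq_zero_or_pos N with hN | hN
  · -- N = 0: f is identically zero
    have hf0 : ∀ x, f x = 0 := by
      intro x
      rw [hfe]
      refine Finset.sum_eq_zero fun k hk => absurd (hS k hk) ?_
      have h1 : (0 : ℤ) < ∏ j, max 1 |k j| :=
        Finset.prod_pos fun j _ => lt_of_lt_of_le zero_lt_one (le_max_left _ _)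
      subst hN
      intro h2
      simp only [Nat.cast_zero] at h2
      linarith
    have : M = 0 := by
      rw [hM]
      have : (fun x : Torus d => ‖f x‖) = fun _ => 0 := funext fun x => by rw [hf0 x]; simp
      rw [this, ciSup_const]
    rw [this]
    exact mul_nonneg (by linarith) hm0
  · -- N ≥ 1: the constant 1 is an HC polynomial, so V is integrable
    have hone : IsHCPoly d N (fun _ => 1) := by
      refine ⟨{0}, fun _ => 1, ?_, ?_⟩
      · intro k hk
        simp only [Finset.mem_singleton] at hk
        subst hk
        simp only [Pi.zero_apply, abs_zero]
        simpa using (show (1:ℤ) ≤ N by exact_mod_cast hN)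
      · funext x
        simp [fourier_zero]
    have hVi : Integrable V (torusMeasure d) := by
      by_contra hVi
      have h1 := hrep _ hone 0
      have hni : ¬ Integrable (fun u : Torus d => (1:ℂ) * V (0 - u)) (torusMeasure d) := by
        simp only [one_mul, zero_sub]
        intro h
        apply hVi
        have hmp := Measure.measurePreserving_neg (torusMeasure d)
        have := (hmp.integrable_comp_emb (MeasurableEquiv.neg (Torus d)).measurableEmbedding
          (g := fun u : Torus d => V (-u))).2 h
        simpa [Function.comp_def] using this
      rw [integral_undef hni] at h1
      exact one_ne_zero h1
    -- the key pointwise estimate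
    have key : ∀ x, ‖f x‖ ≤ M / 2 + C' * m := by
      intro x
      have hmp : MeasurePreserving (fun u : Torus d => x - u) (torusMeasure d) (torusMeasure d) :=
        Measure.measurePreserving_sub_left (torusMeasure d) x
      have hVx : Integrable (fun u : Torus d => V (x - u)) (torusMeasure d) :=
        (hmp.integrable_comp_emb (MeasurableEquiv.subLeft x).measurableEmbedding (g := V)).2 hVi
      have hVxint : ∫ u, ‖V (x - u)‖ ∂(torusMeasure d) = ∫ u, ‖V u‖ ∂(torusMeasure d) :=
        hmp.integral_comp (MeasurableEquiv.subLeft x).measurableEmbedding (fun u => ‖V u‖)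
      have hμB : ((torusMeasure d) B).toReal ≤ 1 / (2 * C'') :=
        ENNReal.toReal_le_of_le_ofReal (by positivity) hBm
      have hrepx := hrep f ⟨S, c, hS, hfe⟩ x
      calc ‖f x‖ = ‖∫ u, f u * V (x - u) ∂(torusMeasure d)‖ := by rw [← hrepx]
        _ ≤ ∫ u, ‖f u * V (x - u)‖ ∂(torusMeasure d) := norm_integral_le_integral_norm _
        _ ≤ ∫ u, (B.indicator (fun _ => M * C'') u + m * ‖V (x - u)‖) ∂(torusMeasure d) := by
            refine integral_mono_of_nonneg (Filter.Eventually.of_forall fun u => norm_nonneg _)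
              (((integrable_const _).indicator hB).add (hVx.norm.const_mul m))
              (Filter.Eventually.of_forall fun u => ?_)
            simp only
            by_cases hu : u ∈ B
            · rw [Set.indicator_of_mem hu]
              have h2 : ‖f u * V (x - u)‖ ≤ M * C'' := by
                rw [norm_mul]
                exact mul_le_mul (hMle u) (hVinf _) (norm_nonneg _) hM0
              have h3 : 0 ≤ m * ‖V (x - u)‖ := mul_nonneg hm0 (norm_nonneg _)
              linarith
            · rw [Set.indicator_of_notMem hu, norm_mul]
              have h2 : ‖f u‖ * ‖V (x - u)‖ ≤ m * ‖V (x - u)‖ :=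
                mul_le_mul_of_nonneg_right (hmle u hu) (norm_nonneg _)
              linarith
        _ = ((torusMeasure d) B).toReal * (M * C'') + m * ∫ u, ‖V (x - u)‖ ∂(torusMeasure d) := by
            rw [integral_add ((integrable_const _).indicator hB) (hVx.norm.const_mul m),
              integral_indicator_const _ hB, integral_const_mul, smul_eq_mul, measureReal_def]
        _ ≤ (1 / (2 * C'')) * (M * C'') + m * C' := by
            have h4 : ∫ u, ‖V (x - u)‖ ∂(torusMeasure d) ≤ C' := by rw [hVxint]; exact hV1
            gcongr
        _ = M / 2 + C' * m := by field_simp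
    have hMain : M ≤ M / 2 + C' * m := ciSup_le key
    nlinarith

end

end RemezHC
end
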